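/- The quotient B_g^{(3)}/B_g^{(2)} is isomorphic to Λ^3 H_{(2)}, via the map identifying the class of the cubic monomial \overline{h_1}·\overline{h_2}·\overline{h_3} with h_1 ∧ h_2 ∧ h_3; in particular this assignment is well defined on classes modulo B_g^{(2)}. -/

import Mathlib

/-- `H_(2) = H ⊗ ℤ/2 = (ℤ/2)^{2g}`, with basis indexed by `Fin g ⊕ Fin g`
(`Sum.inl i = x_i`, `Sum.inr i = y_i`). -/
abbrev H2 (g : ℕ) := Fin g ⊕ Fin g → ZMod 2

/-- The mod-2 symplectic intersection form on `H_(2)`. -/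
def bsym (g : ℕ) (a b : H2 g) : ZMod 2 :=
  ∑ i : Fin g, (a (Sum.inl i) * b (Sum.inr i) + a (Sum.inr i) * b (Sum.inl i))

/-- A quadratic form refining the mod-2 symplectic form. -/
def IsQuad (g : ℕ) (q : H2 g → ZMod 2) : Prop :=
  ∀ a b, q (a + b) = q a + q b + bsym g a b

/-- `Ω_g`, the set of quadratic refinements of the mod-2 symplectic form. -/
abbrev Om (g : ℕ) := {q : H2 g → ZMod 2 // IsQuad g q}
/-- The evaluation function `\overline{h} : Ω_g → ℤ/2`, `q ↦ q(h)`. -/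
def ovh (g : ℕ) (h : H2 g) : Om g → ZMod 2 := fun q => q.1 h

/-- The set of affine functions `\overline{h} + ε·\overline{1}` on `Ω_g`. -/
def Aff (g : ℕ) : Set (Om g → ZMod 2) :=
  {f | ∃ (h : H2 g) (ε : ZMod 2), f = fun q => q.1 h + ε}

/-- `B_g^{(k)}`: the space of Boolean polynomials of degree at most `k`, i.e. the span of
products of at most `k` affine functions. -/
def Bk (g k : ℕ) : Submodule (ZMod 2) (Om g → ZMod 2) :=
  Submodule.span (ZMod 2)
    {f | ∃ l : List (Om g → ZMod 2), l.length ≤ k ∧ (∀ x ∈ l, x ∈ Aff g) ∧ f = l.prod}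
/-- The wedge product `a ∧ b ∧ c` as an element of the third exterior power. -/
noncomputable def wedge3 {R M : Type*} [CommRing R] [AddCommGroup M] [Module R M]
    (a b c : M) : ⋀[R]^3 M :=
  ⟨ExteriorAlgebra.ιMulti R 3 ![a, b, c],
    ExteriorAlgebra.ιMulti_range R 3 ⟨![a, b, c], rfl⟩⟩


set_option synthInstance.maxHeartbeats 400000

namespace CMQ
variable {g : ℕ}



lemma bsym_add_left (a b c : H2 g) : bsym g (a + b) c = bsym g a c + bsym g b c := by
  simp only [bsym, Pi.add_apply, ← Finset.sum_add_distrib]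
  exact Finset.sum_congr rfl fun i _ => by ring

lemma bsym_add_right (a b c : H2 g) : bsym g a (b + c) = bsym g a b + bsym g a c := by
  simp only [bsym, Pi.add_apply, ← Finset.sum_add_distrib]
  exact Finset.sum_congr rfl fun i _ => by ring

lemma bsym_zero_left (b : H2 g) : bsym g 0 b = 0 := by
  simp [bsym]

def q0 (g : ℕ) : Om g :=
  ⟨fun x => ∑ i : Fin g, x (Sum.inl i) * x (Sum.inr i), by
    intro a b
    simp only [bsym, Pi.add_apply, ← Finset.sum_add_distrib]
    exact Finset.sum_congr rfl fun i _ => by ring⟩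

def tr (h : H2 g) (q : Om g) : Om g :=
  ⟨fun x => q.1 x + bsym g h x, by
    intro a b
    show q.1 (a+b) + _ = _
    rw [q.2, bsym_add_right]
    ring⟩

def Dl (a : H2 g) : (Om g → ZMod 2) →ₗ[ZMod 2] (Om g → ZMod 2) where
  toFun f := fun q => f (tr a q) + f q
  map_add' f h := by funext q; simp only [Pi.add_apply]; ring
  map_smul' c f := by funext q; simp only [Pi.smul_apply, smul_eq_mul, RingHom.id_apply]; ring

lemma one_mem_Bk (k : ℕ) : (1 : Om g → ZMod 2) ∈ Bk g k :=
  Submodule.subset_span ⟨[], by simp, by simp, by simp⟩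

lemma Bk_mono {k k' : ℕ} (h : k ≤ k') : Bk g k ≤ Bk g k' :=
  Submodule.span_mono (fun f ⟨l, hl, ha, hp⟩ => ⟨l, hl.trans h, ha, hp⟩)

lemma aff_mul_mem {x f : Om g → ZMod 2} {k : ℕ} (hx : x ∈ Aff g) (hf : f ∈ Bk g k) :
    x * f ∈ Bk g (k + 1) := by
  refine Submodule.span_induction (fun f hf => ?_) (by rw [mul_zero]; exact Submodule.zero_mem _)
    (fun f₁ f₂ _ _ h1 h2 => by rw [mul_add]; exact Submodule.add_mem _ h1 h2)
    (fun c f₁ _ h1 => by rw [mul_smul_comm]; exact Submodule.smul_mem _ _ h1) hf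
  obtain ⟨l, hl, ha, rfl⟩ := hf
  exact Submodule.subset_span ⟨x :: l, by simpa using hl, by
    rintro y hy
    rcases List.mem_cons.mp hy with rfl | hy
    · exact hx
    · exact ha y hy, by simp⟩

lemma const_smul_mem {c : ZMod 2} {f : Om g → ZMod 2} {k : ℕ} (hf : f ∈ Bk g k) :
    (fun _ => c) * f ∈ Bk g k := by
  have : (fun (_ : Om g) => c) * f = c • f := by funext q; simp
  rw [this]; exact Submodule.smul_mem _ _ hf

lemma Dl_aff (a h : H2 g) (ε : ZMod 2) :
    Dl a (fun q => q.1 h + ε) = fun _ => bsym g a h := by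
  funext q
  show ((tr a q).1 h + ε) + (q.1 h + ε) = bsym g a h
  show ((q.1 h + bsym g a h) + ε) + (q.1 h + ε) = bsym g a h
  have : ∀ x y e : ZMod 2, x + y + e + (x + e) = y := by decide
  exact this _ _ _

lemma Dl_mul (a : H2 g) (f h : Om g → ZMod 2) :
    Dl a (f * h) = f * Dl a h + Dl a f * h + Dl a f * Dl a h := by
  funext q
  show f (tr a q) * h (tr a q) + f q * h q = _
  have key : ∀ A B C D : ZMod 2,
      A * B + C * D = C * (B + D) + (A + C) * D + (A + C) * (B + D) := by decide
  exact key _ _ _ _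

lemma Dl_one (a : H2 g) : Dl a (1 : Om g → ZMod 2) = 0 := by
  funext q
  show (1 : ZMod 2) + 1 = 0
  decide

lemma Dl_prod_mem (a : H2 g) : ∀ (l : List (Om g → ZMod 2)) (k : ℕ),
    (∀ x ∈ l, x ∈ Aff g) → l.length ≤ k + 1 → Dl a l.prod ∈ Bk g k := by
  intro l
  induction l with
  | nil => intro k _ _; simp only [List.prod_nil, Dl_one]; exact Submodule.zero_mem _
  | cons x t ih =>
    intro k ha hl
    have hx : x ∈ Aff g := ha x List.mem_cons_self
    have hat : ∀ y ∈ t, y ∈ Aff g := fun y hy => ha y (List.mem_cons_of_mem x hy)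
    obtain ⟨h, ε, rfl⟩ := hx
    rw [List.prod_cons, Dl_mul, Dl_aff]
    have htk : t.length ≤ k := by simpa using hl
    have htmem : t.prod ∈ Bk g k := Submodule.subset_span ⟨t, htk, hat, rfl⟩
    refine Submodule.add_mem _ (Submodule.add_mem _ ?_ ?_) ?_
    · -- (fun q => q.1 h + ε) * Dl a t.prod ∈ Bk g k
      cases k with
      | zero =>
        have : t = [] := List.length_eq_zero_iff.mp (Nat.le_zero.mp htk)
        subst this
        simp only [List.prod_nil, Dl_one, mul_zero]
        exact Submodule.zero_mem _
      | succ k =>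
        exact aff_mul_mem ⟨h, ε, rfl⟩ (ih k hat htk)
    · exact const_smul_mem htmem
    · cases k with
      | zero =>
        have : t = [] := List.length_eq_zero_iff.mp (Nat.le_zero.mp htk)
        subst this
        simp only [List.prod_nil, Dl_one, mul_zero]
        exact Submodule.zero_mem _
      | succ k =>
        exact const_smul_mem (Bk_mono (Nat.le_succ k) (ih k hat htk))

lemma Dl_mem {f : Om g → ZMod 2} {k : ℕ} (a : H2 g) (hf : f ∈ Bk g (k + 1)) :
    Dl a f ∈ Bk g k := by
  refine Submodule.span_induction (fun f hf => ?_) (by rw [map_zero]; exact Submodule.zero_mem _)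
    (fun f₁ f₂ _ _ h1 h2 => by rw [map_add]; exact Submodule.add_mem _ h1 h2)
    (fun c f₁ _ h1 => by rw [map_smul]; exact Submodule.smul_mem _ _ h1) hf
  obtain ⟨l, hl, ha, rfl⟩ := hf
  exact Dl_prod_mem a l k ha hl

lemma Dl_bk0 {f : Om g → ZMod 2} (a : H2 g) (hf : f ∈ Bk g 0) : Dl a f = 0 := by
  refine Submodule.span_induction (fun f hf => ?_) (by simp)
    (fun f₁ f₂ _ _ h1 h2 => by rw [map_add, h1, h2, add_zero])
    (fun c f₁ _ h1 => by rw [map_smul, h1, smul_zero]) hf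
  obtain ⟨l, hl, ha, rfl⟩ := hf
  have : l = [] := List.length_eq_zero_iff.mp (Nat.le_zero.mp hl)
  subst this
  simp [Dl_one]

lemma D3_bk2 {f : Om g → ZMod 2} (a b c : H2 g) (hf : f ∈ Bk g 2) :
    Dl a (Dl b (Dl c f)) = 0 :=
  Dl_bk0 a (Dl_mem b (Dl_mem c hf))




def coefL (a b c : H2 g) : (Om g → ZMod 2) →ₗ[ZMod 2] ZMod 2 :=
  LinearMap.proj (q0 g) ∘ₗ Dl a ∘ₗ Dl b ∘ₗ Dl c


set_option maxHeartbeats 1000000 in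
theorem key12 : ∀ p1 p2 p3 a1 a2 a3 b1 b2 b3 c1 c2 c3 : ZMod 2,
    (p1 + a1 + b1 + c1) * (p2 + a2 + b2 + c2) * (p3 + a3 + b3 + c3)
  + (p1 + a1 + b1) * (p2 + a2 + b2) * (p3 + a3 + b3)
  + ((p1 + a1 + c1) * (p2 + a2 + c2) * (p3 + a3 + c3)
  + (p1 + a1) * (p2 + a2) * (p3 + a3))
  + ((p1 + b1 + c1) * (p2 + b2 + c2) * (p3 + b3 + c3)
  + (p1 + b1) * (p2 + b2) * (p3 + b3)
  + ((p1 + c1) * (p2 + c2) * (p3 + c3)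
  + p1 * p2 * p3))
  = a1 * (b2 * c3 + b3 * c2) + a2 * (b1 * c3 + b3 * c1) + a3 * (b1 * c2 + b2 * c1) := by
  decide

theorem key15 (p1 p2 p3 a1 a2 a3 b1 b2 b3 c1 c2 c3 e1 e2 e3 : ZMod 2) :
    (p1 + a1 + b1 + c1 + e1) * (p2 + a2 + b2 + c2 + e2) * (p3 + a3 + b3 + c3 + e3)
  + (p1 + a1 + b1 + e1) * (p2 + a2 + b2 + e2) * (p3 + a3 + b3 + e3)
  + ((p1 + a1 + c1 + e1) * (p2 + a2 + c2 + e2) * (p3 + a3 + c3 + e3)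
  + (p1 + a1 + e1) * (p2 + a2 + e2) * (p3 + a3 + e3))
  + ((p1 + b1 + c1 + e1) * (p2 + b2 + c2 + e2) * (p3 + b3 + c3 + e3)
  + (p1 + b1 + e1) * (p2 + b2 + e2) * (p3 + b3 + e3)
  + ((p1 + c1 + e1) * (p2 + c2 + e2) * (p3 + c3 + e3)
  + (p1 + e1) * (p2 + e2) * (p3 + e3)))
  = a1 * (b2 * c3 + b3 * c2) + a2 * (b1 * c3 + b3 * c1) + a3 * (b1 * c2 + b2 * c1) := by
  linear_combination key12 (p1 + e1) (p2 + e2) (p3 + e3) a1 a2 a3 b1 b2 b3 c1 c2 c3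

lemma coef_mon (a b c : H2 g) (h₁ h₂ h₃ : H2 g) (ε₁ ε₂ ε₃ : ZMod 2) :
    coefL a b c (fun q => (q.1 h₁ + ε₁) * (q.1 h₂ + ε₂) * (q.1 h₃ + ε₃)) =
      bsym g a h₁ * (bsym g b h₂ * bsym g c h₃ + bsym g b h₃ * bsym g c h₂)
    + bsym g a h₂ * (bsym g b h₁ * bsym g c h₃ + bsym g b h₃ * bsym g c h₁)
    + bsym g a h₃ * (bsym g b h₁ * bsym g c h₂ + bsym g b h₂ * bsym g c h₁) := by
  simp only [coefL, LinearMap.comp_apply, LinearMap.proj_apply, Dl, tr, LinearMap.coe_mk,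
    AddHom.coe_mk]
  linear_combination key15 ((q0 g).1 h₁) ((q0 g).1 h₂) ((q0 g).1 h₃)
    (bsym g a h₁) (bsym g a h₂) (bsym g a h₃) (bsym g b h₁) (bsym g b h₂) (bsym g b h₃)
    (bsym g c h₁) (bsym g c h₂) (bsym g c h₃) ε₁ ε₂ ε₃




noncomputable def wAlt (g : ℕ) : (H2 g) [⋀^Fin 3]→ₗ[ZMod 2] ⋀[ZMod 2]^3 (H2 g) :=
  (ExteriorAlgebra.ιMulti (ZMod 2) 3).codRestrict (⋀[ZMod 2]^3 (H2 g))
    (fun v => ExteriorAlgebra.ιMulti_range (ZMod 2) 3 ⟨v, rfl⟩)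

lemma wedge3_eq (a b c : H2 g) : wedge3 a b c = wAlt g ![a, b, c] := rfl

def E (g : ℕ) : Fin (g + g) → Fin g ⊕ Fin g := fun i => finSumFinEquiv.symm i

def bv (s : Fin g ⊕ Fin g) : H2 g := Pi.single s 1

noncomputable def Bb (g : ℕ) : Module.Basis (Fin (g + g)) (ZMod 2) (H2 g) :=
  (Pi.basisFun (ZMod 2) (Fin g ⊕ Fin g)).reindex finSumFinEquiv

lemma Bb_apply (i : Fin (g + g)) : Bb g i = bv (E g i) := by
  simp [Bb, E, bv, Module.Basis.reindex_apply]

def Tri (n : ℕ) : Finset (Fin n × Fin n × Fin n) :=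
  Finset.univ.filter fun p => p.1 < p.2.1 ∧ p.2.1 < p.2.2

def pos {n : ℕ} (p : Fin n × Fin n × Fin n) : Fin 3 → Fin n := ![p.1, p.2.1, p.2.2]

noncomputable def wdg (g : ℕ) (p : Fin (g+g) × Fin (g+g) × Fin (g+g)) : ⋀[ZMod 2]^3 (H2 g) :=
  wAlt g fun i => Bb g (pos p i)

def Lp (g : ℕ) (p : Fin (g+g) × Fin (g+g) × Fin (g+g)) : H2 g →ₗ[ZMod 2] (Fin 3 → ZMod 2) :=
  LinearMap.pi fun i => LinearMap.proj (E g (pos p i))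

noncomputable def A1 (g : ℕ) : (H2 g) [⋀^Fin 3]→ₗ[ZMod 2] ⋀[ZMod 2]^3 (H2 g) :=
  ∑ p ∈ Tri (g+g), (LinearMap.toSpanSingleton (ZMod 2) _ (wdg g p)).compAlternatingMap
      (Matrix.detRowAlternating.compLinearMap (Lp g p))

lemma alt_sum_apply {ι M N κ : Type*} [CommSemiring (ZMod 2)] [AddCommMonoid M] [AddCommMonoid N]
    [Module (ZMod 2) M] [Module (ZMod 2) N] (s : Finset κ) (F : κ → M [⋀^ι]→ₗ[ZMod 2] N)
    (v : ι → M) : (∑ p ∈ s, F p) v = ∑ p ∈ s, F p v := by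
  induction s using Finset.cons_induction with
  | empty => simp
  | cons a s ha ih => simp [Finset.sum_cons, ih]

lemma A1_apply (v : Fin 3 → H2 g) :
    A1 g v = ∑ p ∈ Tri (g+g),
      Matrix.det (Matrix.of fun j i => v j (E g (pos p i))) • wdg g p := by
  rw [A1, alt_sum_apply]
  rfl





lemma char2_neg {M : Type*} [AddCommGroup M] [Module (ZMod 2) M] (x : M) : -x = x := by
  rw [neg_eq_iff_add_eq_zero, ← two_smul (ZMod 2) x,
    (by decide : (2 : ZMod 2) = 0), zero_smul]

lemma E_inj : Function.Injective (E g) := fun i j h => by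
  simpa [E] using finSumFinEquiv.symm.injective h

lemma A1_eq_wAlt : A1 g = wAlt g := by
  refine Module.Basis.ext_alternating (Bb g) (fun v hv => ?_)
  rw [A1_apply]
  have h01 : v 0 ≠ v 1 := fun h => (by decide : ¬((0:Fin 3) = 1)) (hv h)
  have h02 : v 0 ≠ v 2 := fun h => (by decide : ¬((0:Fin 3) = 2)) (hv h)
  have h12 : v 1 ≠ v 2 := fun h => (by decide : ¬((1:Fin 3) = 2)) (hv h)
  set s : Finset (Fin (g+g)) := {v 0, v 1, v 2} with hs
  have hcard : s.card = 3 := by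
    rw [hs, Finset.card_insert_of_notMem, Finset.card_insert_of_notMem,
      Finset.card_singleton]
    · simpa using h12
    · simp only [Finset.mem_insert, Finset.mem_singleton]
      rintro (h | h)
      exacts [h01 h, h02 h]
  set m := s.orderEmbOfFin hcard with hm
  have hvmem : ∀ j : Fin 3, v j ∈ Set.range m := fun j => by
    rw [Finset.range_orderEmbOfFin]
    fin_cases j <;> simp [hs]
  choose τ hτ using hvmem
  have hτinj : Function.Injective τ := fun i j hij => hv (by rw [← hτ i, ← hτ j, hij])
  let σ : Equiv.Perm (Fin 3) := Equiv.ofBijective τ (Finite.injective_iff_bijective.mp hτinj)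
  have hσ : ∀ j, m (σ j) = v j := hτ
  set p0 : Fin (g+g) × Fin (g+g) × Fin (g+g) := (m 0, m 1, m 2) with hp0
  have hp0mem : p0 ∈ Tri (g+g) := by
    simp only [Tri, Finset.mem_filter, Finset.mem_univ, true_and, hp0]
    exact ⟨m.strictMono (by decide), m.strictMono (by decide)⟩
  have hposmem : ∀ i : Fin 3, pos p0 i ∈ s := by
    intro i
    fin_cases i <;> simp [pos, hp0, hm]
  rw [Finset.sum_eq_single_of_mem p0 hp0mem ?other]
  case other =>
    intro p hp hne
    by_cases hall : ∀ i : Fin 3, pos p i ∈ s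
    · exfalso
      simp only [Tri, Finset.mem_filter, Finset.mem_univ, true_and] at hp
      have hmono : StrictMono (pos p) := by
        intro i j hij
        fin_cases i <;> fin_cases j <;>
          first
          | exact absurd hij (by decide)
          | exact hp.1
          | exact hp.2
          | exact hp.1.trans hp.2
      have := Finset.orderEmbOfFin_unique hcard hall hmono
      apply hne
      have e0 := congrFun this 0
      have e1 := congrFun this 1
      have e2 := congrFun this 2
      simp only [pos] at e0 e1 e2
      rw [hp0]
      exact Prod.ext (by simpa [pos] using e0)
        (Prod.ext (by simpa [pos] using e1) (by simpa [pos] using e2))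
    · push_neg at hall
      obtain ⟨i, hi⟩ := hall
      have hcol : ∀ j, (Matrix.of fun j i => Bb g (v j) (E g (pos p i))) j i = 0 := by
        intro j
        have hne' : pos p i ≠ v j := by
          intro h
          apply hi
          rw [h, hs]
          fin_cases j <;> simp
        simp only [Matrix.of_apply, Bb_apply, bv]
        rw [Pi.single_apply, if_neg (fun h => hne' (E_inj h))]
      rw [Matrix.det_eq_zero_of_column_eq_zero i hcol, zero_smul]
  · -- main term
    have hdet : (Matrix.of fun j i => Bb g (v j) (E g (pos p0 i))) = σ.permMatrix (ZMod 2) := by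
      ext j i
      have hpos : pos p0 i = m i := by fin_cases i <;> rfl
      simp only [Matrix.of_apply, Bb_apply, bv, hpos, Pi.single_apply,
        Equiv.Perm.permMatrix, PEquiv.toMatrix_apply, Equiv.toPEquiv_apply,
        Option.mem_some_iff]
      rw [← hσ j]
      by_cases h : i = σ j
      · rw [if_pos (by rw [h]), if_pos h.symm]
      · rw [if_neg (fun hh => h (m.injective (E_inj hh))), if_neg (fun hh => h hh.symm)]
    rw [hdet, Matrix.det_permutation]
    have hwdg : wdg g p0 = wAlt g fun i => Bb g (m i) := by
      unfold wdg
      congr 1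
      funext i
      fin_cases i <;> rfl
    have hright : (fun j => Bb g (v j)) = (fun i => Bb g (m i)) ∘ σ := by
      funext j
      simp [hσ j]
    rw [hright, AlternatingMap.map_perm, hwdg]
    rcases Int.units_eq_one_or (Equiv.Perm.sign σ) with h | h <;> rw [h]
    · norm_num
    · simp only [Units.smul_def, Units.val_neg, Units.val_one, Int.cast_neg, Int.cast_one,
        neg_one_zsmul, char2_neg, neg_smul, one_smul]




lemma ovh_mem_aff (h : H2 g) : ovh g h ∈ Aff g :=
  ⟨h, 0, by funext q; simp [ovh]⟩

lemma pair_mem (a b : H2 g) : ovh g a * ovh g b ∈ Bk g 2 :=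
  Submodule.subset_span ⟨[ovh g a, ovh g b], by simp,
    by rintro x hx; simp at hx; rcases hx with rfl | rfl <;> exact ovh_mem_aff _, by simp⟩

lemma single_mem (a : H2 g) : ovh g a ∈ Bk g 1 := by
  refine Submodule.subset_span ⟨[ovh g a], by simp, ?_, by simp⟩
  rintro x hx
  simp at hx
  subst hx
  exact ovh_mem_aff _

lemma mon_mem3 (a b c : H2 g) : ovh g a * ovh g b * ovh g c ∈ Bk g 3 :=
  Submodule.subset_span ⟨[ovh g a, ovh g b, ovh g c], by simp,
    by rintro x hx; simp at hx; rcases hx with rfl | rfl | rfl <;> exact ovh_mem_aff _,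
    by simp [mul_assoc]⟩

lemma ovh_add (x y : H2 g) :
    ovh g (x + y) = ovh g x + ovh g y + (fun _ => bsym g x y) := by
  funext q
  exact q.2 x y

lemma ovh_zero : ovh g 0 = 0 := by
  funext q
  have h := q.2 0 0
  rw [add_zero, bsym_zero_left] at h
  exact (by decide : ∀ t : ZMod 2, t = t + t + 0 → t = 0) _ h

lemma const_mul_eq_smul (c : ZMod 2) (P : Om g → ZMod 2) :
    (fun _ => c) * P = c • P := rfl

lemma mk_mul_add (x y : H2 g) (P : Om g → ZMod 2) (hP : P ∈ Bk g 2) :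
    (Submodule.Quotient.mk (ovh g (x + y) * P) : (Om g → ZMod 2) ⧸ Bk g 2) =
      Submodule.Quotient.mk (ovh g x * P) + Submodule.Quotient.mk (ovh g y * P) := by
  rw [ovh_add, add_mul, add_mul, const_mul_eq_smul, Submodule.Quotient.mk_add,
    Submodule.Quotient.mk_add,
    (Submodule.Quotient.mk_eq_zero _).2 (Submodule.smul_mem _ _ hP), add_zero]

noncomputable def mbar (g : ℕ) :
    (H2 g) [⋀^Fin 3]→ₗ[ZMod 2] ((Om g → ZMod 2) ⧸ Bk g 2) where
  toMultilinearMap :=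
  { toFun := fun v => Submodule.Quotient.mk (ovh g (v 0) * ovh g (v 1) * ovh g (v 2))
    map_update_add' := by
      intro dec v i x y
      have hdec : dec = instDecidableEqFin 3 := Subsingleton.elim _ _
      subst hdec
      rcases (by decide : ∀ i : Fin 3, i = 0 ∨ i = 1 ∨ i = 2) i with rfl | rfl | rfl
      · simp only [Function.update_self, Function.update_of_ne (by decide : (1 : Fin 3) ≠ 0),
          Function.update_of_ne (by decide : (2 : Fin 3) ≠ 0)]
        have e : ∀ a P : Om g → ZMod 2, ∀ b, a * b * P = a * (b * P) := fun _ _ _ => mul_assoc _ _ _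
        rw [mul_assoc, mul_assoc, mul_assoc]
        exact mk_mul_add x y _ (pair_mem _ _)
      · simp only [Function.update_self, Function.update_of_ne (by decide : (0 : Fin 3) ≠ 1),
          Function.update_of_ne (by decide : (2 : Fin 3) ≠ 1)]
        have e : ∀ z : H2 g, ovh g (v 0) * ovh g z * ovh g (v 2) =
            ovh g z * (ovh g (v 0) * ovh g (v 2)) := fun z => by ring
        rw [e, e, e]
        exact mk_mul_add x y _ (pair_mem _ _)
      · simp only [Function.update_self, Function.update_of_ne (by decide : (0 : Fin 3) ≠ 2),
          Function.update_of_ne (by decide : (1 : Fin 3) ≠ 2)]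
        have e : ∀ z : H2 g, ovh g (v 0) * ovh g (v 1) * ovh g z =
            ovh g z * (ovh g (v 0) * ovh g (v 1)) := fun z => by ring
        rw [e, e, e]
        exact mk_mul_add x y _ (pair_mem _ _)
    map_update_smul' := by
      intro dec v i c x
      have hdec : dec = instDecidableEqFin 3 := Subsingleton.elim _ _
      subst hdec
      rcases (by decide : ∀ c : ZMod 2, c = 0 ∨ c = 1) c with rfl | rfl
      · rw [zero_smul, zero_smul]
        rcases (by decide : ∀ i : Fin 3, i = 0 ∨ i = 1 ∨ i = 2) i with rfl | rfl | rfl <;>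
          simp [Function.update_self, Function.update_of_ne, ovh_zero, zero_mul, mul_zero]
      · rw [one_smul, one_smul] }
  map_eq_zero_of_eq' := by
    intro v i j hv hij
    have e1 : ∀ x y : ZMod 2, x * x * y = x * y := by decide
    have e2 : ∀ x y : ZMod 2, x * y * x = y * x := by decide
    have e3 : ∀ x y : ZMod 2, x * y * y = x * y := by decide
    show Submodule.Quotient.mk (ovh g (v 0) * ovh g (v 1) * ovh g (v 2)) = 0
    rcases (by decide : ∀ i j : Fin 3, i ≠ j →
        (i = 0 ∧ j = 1) ∨ (i = 0 ∧ j = 2) ∨ (i = 1 ∧ j = 0) ∨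
        (i = 1 ∧ j = 2) ∨ (i = 2 ∧ j = 0) ∨ (i = 2 ∧ j = 1)) i j hij with
      ⟨rfl, rfl⟩ | ⟨rfl, rfl⟩ | ⟨rfl, rfl⟩ | ⟨rfl, rfl⟩ | ⟨rfl, rfl⟩ | ⟨rfl, rfl⟩
    · rw [hv]
      refine (Submodule.Quotient.mk_eq_zero _).2 ?_
      rw [show ovh g (v 1) * ovh g (v 1) * ovh g (v 2) = ovh g (v 1) * ovh g (v 2) from funext fun q => e1 _ _]
      exact pair_mem _ _
    · rw [hv]
      refine (Submodule.Quotient.mk_eq_zero _).2 ?_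
      rw [show ovh g (v 2) * ovh g (v 1) * ovh g (v 2) = ovh g (v 1) * ovh g (v 2) from funext fun q => e2 _ _]
      exact pair_mem _ _
    · rw [hv]
      refine (Submodule.Quotient.mk_eq_zero _).2 ?_
      rw [show ovh g (v 0) * ovh g (v 0) * ovh g (v 2) = ovh g (v 0) * ovh g (v 2) from funext fun q => e1 _ _]
      exact pair_mem _ _
    · rw [hv]
      refine (Submodule.Quotient.mk_eq_zero _).2 ?_
      rw [show ovh g (v 0) * ovh g (v 2) * ovh g (v 2) = ovh g (v 0) * ovh g (v 2) from funext fun q => e3 _ _]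
      exact pair_mem _ _
    · rw [hv]
      refine (Submodule.Quotient.mk_eq_zero _).2 ?_
      rw [show ovh g (v 0) * ovh g (v 1) * ovh g (v 0) = ovh g (v 1) * ovh g (v 0) from funext fun q => e2 _ _]
      exact pair_mem _ _
    · rw [hv]
      refine (Submodule.Quotient.mk_eq_zero _).2 ?_
      rw [show ovh g (v 0) * ovh g (v 1) * ovh g (v 1) = ovh g (v 0) * ovh g (v 1) from funext fun q => e3 _ _]
      exact pair_mem _ _


noncomputable def altFam (g : ℕ) :
    ∀ i : ℕ, (H2 g) [⋀^Fin i]→ₗ[ZMod 2] ((Om g → ZMod 2) ⧸ Bk g 2)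
  | 3 => mbar g
  | 0 => 0
  | 1 => 0
  | 2 => 0
  | (_ + 4) => 0

noncomputable def mu (g : ℕ) :
    (⋀[ZMod 2]^3 (H2 g)) →ₗ[ZMod 2] ((Om g → ZMod 2) ⧸ Bk g 2) :=
  (ExteriorAlgebra.liftAlternating (altFam g)).comp (⋀[ZMod 2]^3 (H2 g)).subtype

lemma mu_wAlt (v : Fin 3 → H2 g) :
    mu g (wAlt g v) = Submodule.Quotient.mk (ovh g (v 0) * ovh g (v 1) * ovh g (v 2)) := by
  have h : mu g (wAlt g v) = ExteriorAlgebra.liftAlternating (altFam g)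
      (ExteriorAlgebra.ιMulti (ZMod 2) 3 v) := rfl
  rw [h, ExteriorAlgebra.liftAlternating_apply_ιMulti]
  rfl

def bjv (g : ℕ) (i : Fin (g + g)) : H2 g := bv (E g i).swap

lemma bsym_bv_swap (s : Fin g ⊕ Fin g) (h : H2 g) : bsym g (bv s.swap) h = h s := by
  cases s with
  | inl i0 =>
    have key : ∀ i : Fin g,
        bv (Sum.swap (Sum.inl i0)) (Sum.inl i) * h (Sum.inr i) +
          bv (Sum.swap (Sum.inl i0)) (Sum.inr i) * h (Sum.inl i) =
          if i = i0 then h (Sum.inl i) else 0 := by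
      intro i
      by_cases hi : i = i0
      · subst hi; simp [bv]
      · simp [bv, Pi.single_apply, hi]
    rw [bsym, Finset.sum_congr rfl fun i _ => key i, Finset.sum_ite_eq' Finset.univ i0]
    simp
  | inr i0 =>
    have key : ∀ i : Fin g,
        bv (Sum.swap (Sum.inr i0)) (Sum.inl i) * h (Sum.inr i) +
          bv (Sum.swap (Sum.inr i0)) (Sum.inr i) * h (Sum.inl i) =
          if i = i0 then h (Sum.inr i) else 0 := by
      intro i
      by_cases hi : i = i0
      · subst hi; simp [bv]
      · simp [bv, Pi.single_apply, hi]
    rw [bsym, Finset.sum_congr rfl fun i _ => key i, Finset.sum_ite_eq' Finset.univ i0]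
    simp

lemma bsym_bjv (i : Fin (g + g)) (h : H2 g) : bsym g (bjv g i) h = h (E g i) :=
  bsym_bv_swap _ _

noncomputable def nu (g : ℕ) : (Om g → ZMod 2) →ₗ[ZMod 2] ⋀[ZMod 2]^3 (H2 g) :=
  ∑ p ∈ Tri (g + g), LinearMap.toSpanSingleton (ZMod 2) _ (wdg g p) ∘ₗ
    coefL (bjv g p.1) (bjv g p.2.1) (bjv g p.2.2)

lemma nu_apply (f : Om g → ZMod 2) : nu g f = ∑ p ∈ Tri (g + g),
    coefL (bjv g p.1) (bjv g p.2.1) (bjv g p.2.2) f • wdg g p := by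
  simp [nu, LinearMap.sum_apply, LinearMap.toSpanSingleton_apply]

lemma coefL_apply (a b c : H2 g) (f : Om g → ZMod 2) :
    coefL a b c f = Dl a (Dl b (Dl c f)) (q0 g) := rfl

lemma nu_bk2 {f : Om g → ZMod 2} (hf : f ∈ Bk g 2) : nu g f = 0 := by
  rw [nu_apply]
  refine Finset.sum_eq_zero fun p _ => ?_
  rw [coefL_apply, D3_bk2 _ _ _ hf]
  simp

lemma det3_eq (M : Matrix (Fin 3) (Fin 3) (ZMod 2)) :
    M.det = M 0 0 * (M 1 1 * M 2 2 + M 1 2 * M 2 1) + M 0 1 * (M 1 0 * M 2 2 + M 1 2 * M 2 0)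
      + M 0 2 * (M 1 0 * M 2 1 + M 1 1 * M 2 0) := by
  rw [Matrix.det_fin_three]
  have h2 : (2 : ZMod 2) = 0 := by decide
  linear_combination (-(M 0 0 * M 1 2 * M 2 1 + M 0 1 * M 1 0 * M 2 2 + M 0 2 * M 1 1 * M 2 0)) * h2

lemma nu_aff (h₁ h₂ h₃ : H2 g) (ε₁ ε₂ ε₃ : ZMod 2) :
    nu g (fun q => (q.1 h₁ + ε₁) * (q.1 h₂ + ε₂) * (q.1 h₃ + ε₃)) = A1 g ![h₁, h₂, h₃] := by
  rw [nu_apply, A1_apply]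
  refine Finset.sum_congr rfl fun p _ => ?_
  congr 1
  rw [coef_mon, det3_eq]
  simp only [Matrix.of_apply, bsym_bjv, pos, Matrix.cons_val_zero, Matrix.cons_val_one,
    Matrix.head_cons, Matrix.cons_val_two, Matrix.tail_cons]
  ring

lemma mon_eq_aff (h₁ h₂ h₃ : H2 g) :
    ovh g h₁ * ovh g h₂ * ovh g h₃ =
      fun q => (q.1 h₁ + 0) * (q.1 h₂ + 0) * (q.1 h₃ + 0) := by
  funext q; simp [ovh]

lemma mu_nu {f : Om g → ZMod 2} (hf : f ∈ Bk g 3) :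
    mu g (nu g f) = Submodule.Quotient.mk f := by
  induction hf using Submodule.span_induction with
  | mem f hf =>
    obtain ⟨l, hl, ha, rfl⟩ := hf
    rcases l with _ | ⟨x, _ | ⟨y, _ | ⟨z, _ | ⟨w, t⟩⟩⟩⟩
    · have hf2 : ([] : List (Om g → ZMod 2)).prod ∈ Bk g 2 :=
        Submodule.subset_span ⟨[], by simp, by simp, rfl⟩
      rw [nu_bk2 hf2, LinearMap.map_zero, eq_comm]
      exact (Submodule.Quotient.mk_eq_zero _).2 hf2
    · have hf2 : [x].prod ∈ Bk g 2 :=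
        Submodule.subset_span ⟨[x], by simp, ha, rfl⟩
      rw [nu_bk2 hf2, LinearMap.map_zero, eq_comm]
      exact (Submodule.Quotient.mk_eq_zero _).2 hf2
    · have hf2 : [x, y].prod ∈ Bk g 2 :=
        Submodule.subset_span ⟨[x, y], by simp, ha, rfl⟩
      rw [nu_bk2 hf2, LinearMap.map_zero, eq_comm]
      exact (Submodule.Quotient.mk_eq_zero _).2 hf2
    · obtain ⟨h₁, ε₁, rfl⟩ := ha x (by simp)
      obtain ⟨h₂, ε₂, rfl⟩ := ha y (by simp)
      obtain ⟨h₃, ε₃, rfl⟩ := ha z (by simp)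
      have hprod : (fun q : Om g => q.1 h₁ + ε₁) *
          ((fun q : Om g => q.1 h₂ + ε₂) * (fun q : Om g => q.1 h₃ + ε₃))
          = fun q : Om g => (q.1 h₁ + ε₁) * (q.1 h₂ + ε₂) * (q.1 h₃ + ε₃) := by
        funext q
        simp only [Pi.mul_apply]
        ring
      rw [List.prod_cons, List.prod_cons, List.prod_cons, List.prod_nil, mul_one, hprod,
        nu_aff, A1_eq_wAlt, mu_wAlt]
      simp only [Matrix.cons_val_zero, Matrix.cons_val_one, Matrix.head_cons,
        Matrix.cons_val_two, Matrix.tail_cons]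
      rw [Submodule.Quotient.eq]
      have hdiff : ovh g h₁ * ovh g h₂ * ovh g h₃ -
          (fun q : Om g => (q.1 h₁ + ε₁) * (q.1 h₂ + ε₂) * (q.1 h₃ + ε₃))
          = -(ε₁ • (ovh g h₂ * ovh g h₃) + ε₂ • (ovh g h₁ * ovh g h₃)
            + ε₃ • (ovh g h₁ * ovh g h₂)
            + (ε₂ * ε₃) • ovh g h₁ + (ε₁ * ε₃) • ovh g h₂ + (ε₁ * ε₂) • ovh g h₃
            + (ε₁ * ε₂ * ε₃) • (1 : Om g → ZMod 2)) := by
        funext q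
        simp only [Pi.sub_apply, Pi.neg_apply, Pi.add_apply, Pi.smul_apply, Pi.mul_apply,
          Pi.one_apply, smul_eq_mul, ovh]
        ring
      rw [hdiff]
      refine Submodule.neg_mem _ (add_mem (add_mem (add_mem (add_mem (add_mem (add_mem
        (Submodule.smul_mem _ _ (pair_mem _ _)) (Submodule.smul_mem _ _ (pair_mem _ _)))
        (Submodule.smul_mem _ _ (pair_mem _ _)))
        (Submodule.smul_mem _ _ (Bk_mono (by norm_num) (single_mem _))))
        (Submodule.smul_mem _ _ (Bk_mono (by norm_num) (single_mem _))))
        (Submodule.smul_mem _ _ (Bk_mono (by norm_num) (single_mem _))))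
        (Submodule.smul_mem _ _ (one_mem_Bk _)))
    · simp at hl; omega
  | zero => rw [(nu g).map_zero, (mu g).map_zero, Submodule.Quotient.mk_zero]
  | add x y hx hy ihx ihy => rw [map_add, map_add, ihx, ihy, Submodule.Quotient.mk_add]
  | smul c x hx ihx => rw [map_smul, map_smul, ihx, Submodule.Quotient.mk_smul]

end CMQ

/-- `B_g^{(3)}/B_g^{(2)} ≅ Λ³H_(2)`, via `[\overline{h₁}·\overline{h₂}·\overline{h₃}] ↦
h₁ ∧ h₂ ∧ h₃`.  We state this as: there is a surjective `ℤ/2`-linear map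
`φ : B_g^{(3)} → Λ³H_(2)` with kernel exactly `B_g^{(2)}`, sending each cubic monomial
`\overline{h₁}\overline{h₂}\overline{h₃}` to `h₁ ∧ h₂ ∧ h₃`. -/
theorem cubic_mod_quadratic_iso (g : ℕ) :
    ∃ φ : (Bk g 3) →ₗ[ZMod 2] ⋀[ZMod 2]^3 (H2 g),
      Function.Surjective φ ∧
      (∀ f : Bk g 3, φ f = 0 ↔ (f : Om g → ZMod 2) ∈ Bk g 2) ∧
      (∀ (h₁ h₂ h₃ : H2 g) (hm : ovh g h₁ * ovh g h₂ * ovh g h₃ ∈ Bk g 3),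
        φ ⟨ovh g h₁ * ovh g h₂ * ovh g h₃, hm⟩ = wedge3 h₁ h₂ h₃) := by
  classical
  refine ⟨(CMQ.nu g).comp (Bk g 3).subtype, ?_, ?_, ?_⟩
  · -- surjectivity
    have key : ∀ y, y ∈ Submodule.span (ZMod 2)
        (Set.range (ExteriorAlgebra.ιMulti (ZMod 2) 3 (M := H2 g))) →
        ∃ f : Bk g 3, (CMQ.nu g f.1 : ExteriorAlgebra (ZMod 2) (H2 g)) = y := by
      intro y hy
      induction hy using Submodule.span_induction with
      | mem y hy =>
        obtain ⟨v, rfl⟩ := hy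
        refine ⟨⟨ovh g (v 0) * ovh g (v 1) * ovh g (v 2), CMQ.mon_mem3 _ _ _⟩, ?_⟩
        have h1 : CMQ.nu g (ovh g (v 0) * ovh g (v 1) * ovh g (v 2)) =
            CMQ.wAlt g ![v 0, v 1, v 2] := by
          rw [CMQ.mon_eq_aff, CMQ.nu_aff, CMQ.A1_eq_wAlt]
        show ((CMQ.nu g (ovh g (v 0) * ovh g (v 1) * ovh g (v 2)) :
            ⋀[ZMod 2]^3 (H2 g)) : ExteriorAlgebra (ZMod 2) (H2 g)) = _
        rw [h1]
        show ExteriorAlgebra.ιMulti (ZMod 2) 3 ![v 0, v 1, v 2] =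
          ExteriorAlgebra.ιMulti (ZMod 2) 3 v
        congr 1
        funext i
        fin_cases i <;> rfl
      | zero => exact ⟨0, by simp⟩
      | add y z hy hz ihy ihz =>
        obtain ⟨f1, hf1⟩ := ihy
        obtain ⟨f2, hf2⟩ := ihz
        exact ⟨f1 + f2, by rw [Submodule.coe_add, map_add, Submodule.coe_add, hf1, hf2]⟩
      | smul c y hy ihy =>
        obtain ⟨f1, hf1⟩ := ihy
        exact ⟨c • f1, by rw [Submodule.coe_smul, map_smul, Submodule.coe_smul, hf1]⟩
    intro x
    have hx : (x : ExteriorAlgebra (ZMod 2) (H2 g)) ∈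
        Submodule.span (ZMod 2) (Set.range (ExteriorAlgebra.ιMulti (ZMod 2) 3)) := by
      rw [ExteriorAlgebra.ιMulti_span_fixedDegree]; exact x.2
    obtain ⟨f, hf⟩ := key _ hx
    exact ⟨f, Subtype.ext hf⟩
  · -- kernel
    intro f
    constructor
    · intro h0
      have hm := CMQ.mu_nu f.2
      rw [show CMQ.nu g f.1 = 0 from h0, map_zero] at hm
      exact (Submodule.Quotient.mk_eq_zero _).1 hm.symm
    · intro hf2
      show CMQ.nu g f.1 = 0
      exact CMQ.nu_bk2 hf2
  · -- monomials
    intro h₁ h₂ h₃ hm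
    show CMQ.nu g (ovh g h₁ * ovh g h₂ * ovh g h₃) = wedge3 h₁ h₂ h₃
    rw [CMQ.mon_eq_aff, CMQ.nu_aff, CMQ.A1_eq_wAlt, CMQ.wedge3_eq]
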